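/- arXiv:1603.02323 — 2 statements merged into one kernel-verified Lean document; each statement's English description precedes it below -/
import Mathlib

section
/- (Clustering Lemma) Let k# ≥ 2 be given. There exists a constant c > 0 depending only on k# and n such that: for any finite set S ⊂ ℝⁿ with 2 ≤ #(S) ≤ k#, S can be partitioned into nonempty subsets S₀, S₁, ..., S_{ν_max} such that #(S_ν) < #(S) for each ν, and dist(S_ν, S_μ) ≥ c · diam(S) for all μ ≠ ν. -/
lemma gap_lemma (k : ℕ) (hk : 1 ≤ k) (d : ℝ) (hd : 0 < d) (R : Finset ℝ)
    (hcard : R.card ≤ k) (h0 : (0:ℝ) ∈ R) (hnn : ∀ r ∈ R, 0 ≤ r)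
    (hub : ∀ r ∈ R, r ≤ d) :
    ∃ t : ℝ, 0 ≤ t ∧ t < d ∧ ∀ r ∈ R, r ≤ t ∨ t + d / k ≤ r := by
  have hkR : (0:ℝ) < k := by exact_mod_cast hk
  set φ : ℝ → ℕ := fun r => (⌈r * k / d⌉).toNat with hφ
  have hceil : ∀ r ∈ R.erase 0, 0 < ⌈r * k / d⌉ ∧ ⌈r * k / d⌉ ≤ (k:ℤ) := by
    intro r hr
    have hrne : r ≠ 0 := Finset.ne_of_mem_erase hr
    have hrR : r ∈ R := Finset.mem_of_mem_erase hr
    have hrpos : 0 < r := lt_of_le_of_ne (hnn r hrR) (Ne.symm hrne)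
    have hx : 0 < r * k / d := by positivity
    refine ⟨Int.ceil_pos.mpr hx, ?_⟩
    apply Int.ceil_le.mpr
    push_cast
    rw [div_le_iff₀ hd]
    nlinarith [hub r hrR]
  have hsub : (R.erase 0).image φ ⊆ Finset.Icc 1 k := by
    intro j hj
    obtain ⟨r, hr, rfl⟩ := Finset.mem_image.mp hj
    obtain ⟨h1, h2⟩ := hceil r hr
    simp only [Finset.mem_Icc, hφ]
    omega
  have hlt : ((R.erase 0).image φ).card < (Finset.Icc 1 k).card := by
    calc ((R.erase 0).image φ).card ≤ (R.erase 0).card := Finset.card_image_le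
      _ = R.card - 1 := Finset.card_erase_of_mem h0
      _ < k := by omega
      _ = (Finset.Icc 1 k).card := by rw [Nat.card_Icc]; omega
  have hnsub : ¬ (Finset.Icc 1 k ⊆ (R.erase 0).image φ) := fun h =>
    absurd (Finset.card_le_card h) (not_le.mpr hlt)
  obtain ⟨j, hjI, hjnot⟩ := Finset.not_subset.mp hnsub
  obtain ⟨hj1, hjk⟩ := Finset.mem_Icc.mp hjI
  have hj1' : (1:ℝ) ≤ (j:ℝ) := by exact_mod_cast hj1
  have hjk' : (j:ℝ) ≤ (k:ℝ) := by exact_mod_cast hjk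
  refine ⟨((j : ℝ) - 1) * d / k, ?_, ?_, ?_⟩
  · apply div_nonneg (mul_nonneg (by linarith) hd.le) hkR.le
  · rw [div_lt_iff₀ hkR]; nlinarith
  · intro r hr
    by_cases hr0 : r = 0
    · left
      rw [hr0]
      apply div_nonneg (mul_nonneg (by linarith) hd.le) hkR.le
    · have hrE : r ∈ R.erase 0 := Finset.mem_erase.mpr ⟨hr0, hr⟩
      have hφne : φ r ≠ j := fun h => hjnot (Finset.mem_image.mpr ⟨r, hrE, h⟩)
      obtain ⟨hc1, hc2⟩ := hceil r hrE
      have hcne : ⌈r * k / d⌉ ≠ (j:ℤ) := by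
        intro h
        apply hφne
        simp only [hφ, h, Int.toNat_natCast]
      rcases lt_or_gt_of_ne hcne with hlt' | hgt'
      · left
        have h1 : ⌈r * k / d⌉ ≤ (j:ℤ) - 1 := by omega
        have h2 : r * k / d ≤ (j:ℝ) - 1 := by
          calc r * k / d ≤ (⌈r * k / d⌉ : ℝ) := Int.le_ceil _
            _ ≤ ((j:ℝ) - 1) := by exact_mod_cast h1
        rw [div_le_iff₀ hd] at h2
        rw [le_div_iff₀ hkR]
        nlinarith
      · right
        have h1 : (j:ℤ) + 1 ≤ ⌈r * k / d⌉ := by omega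
        have h2 : (j:ℝ) < r * k / d := by
          have := Int.ceil_lt_add_one (r * k / d)
          have h1' : ((j:ℝ) + 1) ≤ (⌈r * k / d⌉ : ℝ) := by exact_mod_cast h1
          linarith
        have : ((j:ℝ) - 1) * d / k + d / k = (j:ℝ) * d / k := by ring
        rw [this]
        rw [lt_div_iff₀ hd] at h2
        rw [div_le_iff₀ hkR]
        nlinarith

/-- Clustering Lemma: given `k# ≥ 2`, there is a constant `c > 0` depending only
on `k#` and `n` such that any finite set `S ⊂ ℝⁿ` with `2 ≤ #(S) ≤ k#` can be
partitioned into nonempty subsets `S₀, …, S_{ν_max}`, each of cardinality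
strictly less than `#(S)`, with `dist(S_ν, S_μ) ≥ c · diam(S)` for `μ ≠ ν`. -/
theorem clustering_lemma (n kSharp : ℕ) (hk : 2 ≤ kSharp) :
    ∃ c : ℝ, 0 < c ∧
      ∀ S : Set (EuclideanSpace ℝ (Fin n)), S.Finite → 2 ≤ S.ncard → S.ncard ≤ kSharp →
        ∃ (νmax : ℕ) (T : Fin (νmax + 1) → Set (EuclideanSpace ℝ (Fin n))),
          (∀ ν, (T ν).Nonempty) ∧
          (∀ μ ν, μ ≠ ν → T μ ∩ T ν = ∅) ∧
          (⋃ ν, T ν) = S ∧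
          (∀ ν, (T ν).ncard < S.ncard) ∧
          (∀ μ ν, μ ≠ ν → ∀ a ∈ T μ, ∀ b ∈ T ν, c * Metric.diam S ≤ dist a b) := by
  have hk0 : 0 < kSharp := by omega
  have hkR : (0:ℝ) < kSharp := by exact_mod_cast hk0
  refine ⟨1 / (2 * kSharp), by positivity, ?_⟩
  intro S hfin h2 hle
  -- get two distinct points
  obtain ⟨p, hp, q, hq, hpq⟩ := (Set.one_lt_ncard hfin).mp (by omega)
  -- maximizer of distance to p
  obtain ⟨x₀, hx₀S, hx₀max⟩ := Set.exists_max_image S (fun x => dist x p) hfin ⟨p, hp⟩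
  set m : ℝ := dist x₀ p with hm
  have hm0 : 0 < m := by
    have h1 : dist q p ≤ m := hx₀max q hq
    have h2 : 0 < dist q p := dist_pos.mpr hpq.symm
    linarith
  -- the set of distances
  set R : Finset ℝ := hfin.toFinset.image (fun x => dist x p) with hR
  have hmemR : ∀ x ∈ S, dist x p ∈ R := by
    intro x hx
    exact Finset.mem_image.mpr ⟨x, hfin.mem_toFinset.mpr hx, rfl⟩
  have hcard : R.card ≤ kSharp := by
    calc R.card ≤ hfin.toFinset.card := Finset.card_image_le
      _ = S.ncard := (Set.ncard_eq_toFinset_card S hfin).symm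
      _ ≤ kSharp := hle
  obtain ⟨t, ht0, htm, hdich⟩ := gap_lemma kSharp (by omega) m hm0 R hcard
    (by simpa using hmemR p hp)
    (by
      intro r hr
      obtain ⟨x, _, rfl⟩ := Finset.mem_image.mp hr
      exact dist_nonneg)
    (by
      intro r hr
      obtain ⟨x, hx, rfl⟩ := Finset.mem_image.mp hr
      exact hx₀max x (hfin.mem_toFinset.mp hx))
  -- the two clusters
  set A : Set (EuclideanSpace ℝ (Fin n)) := {x ∈ S | dist x p ≤ t} with hA
  set B : Set (EuclideanSpace ℝ (Fin n)) := {x ∈ S | t < dist x p} with hB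
  have hpA : p ∈ A := ⟨hp, by simpa using ht0⟩
  have hx₀B : x₀ ∈ B := ⟨hx₀S, by rw [← hm]; exact htm⟩
  have hAS : A ⊆ S := fun x hx => hx.1
  have hBS : B ⊆ S := fun x hx => hx.1
  have hx₀nA : x₀ ∉ A := fun h => absurd h.2 (not_le.mpr htm)
  have hpnB : p ∉ B := fun h => by have := h.2; rw [dist_self] at this; linarith
  -- diameter bound
  have hdiam : Metric.diam S ≤ 2 * m := by
    apply Metric.diam_le_of_forall_dist_le (by positivity)
    intro x hx y hy
    calc dist x y ≤ dist x p + dist p y := dist_triangle x p y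
      _ = dist x p + dist y p := by rw [dist_comm p y]
      _ ≤ m + m := add_le_add (hx₀max x hx) (hx₀max y hy)
      _ = 2 * m := by ring
  -- key distance estimate
  have key : ∀ a ∈ A, ∀ b ∈ B, 1 / (2 * kSharp) * Metric.diam S ≤ dist a b := by
    intro a ha b hb
    have hbR : dist b p ∈ R := hmemR b hb.1
    have hb' : t + m / kSharp ≤ dist b p := by
      rcases hdich _ hbR with h | h
      · exact absurd hb.2 (not_lt.mpr h)
      · exact h
    have htri : dist b p ≤ dist b a + dist a p := dist_triangle b a p
    have h1 : m / kSharp ≤ dist b a := by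
      have := ha.2
      linarith
    calc 1 / (2 * kSharp) * Metric.diam S ≤ 1 / (2 * kSharp) * (2 * m) := by
          apply mul_le_mul_of_nonneg_left hdiam (by positivity)
      _ = m / kSharp := by field_simp
      _ ≤ dist b a := h1
      _ = dist a b := dist_comm b a
  refine ⟨1, ![A, B], ?_, ?_, ?_, ?_, ?_⟩
  · intro ν
    fin_cases ν
    · exact ⟨p, hpA⟩
    · exact ⟨x₀, hx₀B⟩
  · intro μ ν hne
    have hABd : A ∩ B = ∅ := by
      ext x
      simp only [Set.mem_inter_iff, Set.mem_empty_iff_false, iff_false]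
      rintro ⟨h1, h2⟩
      exact absurd h1.2 (not_le.mpr h2.2)
    fin_cases μ <;> fin_cases ν <;> simp_all [Set.inter_comm]
  · ext x
    simp only [Set.mem_iUnion]
    constructor
    · rintro ⟨ν, hν⟩
      fin_cases ν
      · exact hAS hν
      · exact hBS hν
    · intro hx
      rcases le_or_gt (dist x p) t with h | h
      · exact ⟨0, hx, h⟩
      · exact ⟨1, hx, h⟩
  · intro ν
    fin_cases ν
    · exact Set.ncard_lt_ncard ⟨hAS, fun h => hx₀nA (h hx₀S)⟩ hfin
    · exact Set.ncard_lt_ncard ⟨hBS, fun h => hpnB (h hp)⟩ hfin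
  · intro μ ν hne a ha b hb
    fin_cases μ <;> fin_cases ν <;>
      simp only [Matrix.cons_val_zero, Matrix.cons_val_one, Matrix.head_cons] at ha hb <;>
      first
        | exact absurd rfl hne
        | exact key a ha b hb
        | (rw [dist_comm]; exact key b hb a ha)
end

section
/- Suppose Γ⃗ = (Γ(x,M))_{x∈E,M>0} is a (C_w, δ_max)-convex shape field. Fix x₀ ∈ E, M₀ > 0, 0 < δ ≤ δ_max, C₁ > 0, and P⁰, P̂, Ŝ ∈ P. Assume: P⁰ + (1/C₁)P̂ ∈ Γ(x₀, C₁M₀) and P⁰ − (1/C₁)P̂ ∈ Γ(x₀, C₁M₀); |∂^β P̂(x₀)| ≤ C₁M₀δ^{m−|β|} for |β| ≤ m−1; and |∂^β Ŝ(x₀)| ≤ C₁δ^{−|β|} for |β| ≤ m−1. Then there is a constant C₂ determined by C₁, C_w, m, n such that P⁰ + (1/C₂)(Ŝ⊙_{x₀}P̂) ∈ Γ(x₀, C₂M₀) and P⁰ − (1/C₂)(Ŝ⊙_{x₀}P̂) ∈ Γ(x₀, C₂M₀). -/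
noncomputable section

/-- Iterated partial derivative `∂^β` of a multivariate polynomial. -/
def pdiff {n : ℕ} (β : Fin n → ℕ) (P : MvPolynomial (Fin n) ℝ) :
    MvPolynomial (Fin n) ℝ :=
  (List.finRange n).foldr (fun i Q => (fun R => MvPolynomial.pderiv i R)^[β i] Q) P

/-- `∂^β P (x)`. -/
def pdEval {n : ℕ} (β : Fin n → ℕ) (P : MvPolynomial (Fin n) ℝ) (x : Fin n → ℝ) : ℝ :=
  MvPolynomial.eval x (pdiff β P)

/-- The multiindices of order `≤ m - 1` as a `Finset`. -/
def multiIdx (m n : ℕ) : Finset (Fin n → ℕ) :=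
  (Fintype.piFinset fun _ : Fin n => Finset.range m).filter fun α => (∑ i, α i) ≤ m - 1

/-- The `(m-1)`-st degree Taylor polynomial (jet) of `R` at `x`. -/
def jetAt (m : ℕ) {n : ℕ} (x : Fin n → ℝ) (R : MvPolynomial (Fin n) ℝ) :
    MvPolynomial (Fin n) ℝ :=
  ∑ α ∈ multiIdx m n,
    MvPolynomial.C (pdEval α R x / ((∏ i, Nat.factorial (α i) : ℕ) : ℝ)) *
      ∏ i, (MvPolynomial.X i - MvPolynomial.C (x i)) ^ α i

/-- Multiplication of jets at `x`: `P ⊙ₓ Q = J_x (P Q)`. -/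
def odot (m : ℕ) {n : ℕ} (x : Fin n → ℝ) (P Q : MvPolynomial (Fin n) ℝ) :
    MvPolynomial (Fin n) ℝ :=
  jetAt m x (P * Q)

/-- `Γ` is a shape field on `E`: each `Γ(x,M)` is a convex set of polynomials of
degree `≤ m-1`, monotone in `M`. -/
def ShapeField (m n : ℕ) (E : Set (Fin n → ℝ))
    (Γ : (Fin n → ℝ) → ℝ → Set (MvPolynomial (Fin n) ℝ)) : Prop :=
  ∀ x ∈ E, ∀ M : ℝ, 0 < M → Convex ℝ (Γ x M) ∧ (∀ P ∈ Γ x M, P.totalDegree ≤ m - 1) ∧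
    ∀ M' : ℝ, 0 < M' → M' ≤ M → Γ x M' ⊆ Γ x M

/-- `(C_w, δ_max)`-convexity of a shape field. -/
def WConvex (m n : ℕ) (E : Set (Fin n → ℝ))
    (Γ : (Fin n → ℝ) → ℝ → Set (MvPolynomial (Fin n) ℝ)) (Cw δmax : ℝ) : Prop :=
  ∀ δ : ℝ, 0 < δ → δ ≤ δmax → ∀ x ∈ E, ∀ M : ℝ, 0 < M →
    ∀ P₁ P₂ Q₁ Q₂ : MvPolynomial (Fin n) ℝ,
      P₁ ∈ Γ x M → P₂ ∈ Γ x M →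
      (∀ β : Fin n → ℕ, (∑ i, β i) ≤ m - 1 →
        |pdEval β (P₁ - P₂) x| ≤ M * δ ^ (m - ∑ i, β i)) →
      (∀ β : Fin n → ℕ, (∑ i, β i) ≤ m - 1 →
        |pdEval β Q₁ x| ≤ δ ^ (-(∑ i, (β i : ℤ))) ∧
        |pdEval β Q₂ x| ≤ δ ^ (-(∑ i, (β i : ℤ)))) →
      odot m x Q₁ Q₁ + odot m x Q₂ Q₂ = 1 →
      odot m x (odot m x Q₁ Q₁) P₁ + odot m x (odot m x Q₂ Q₂) P₂ ∈ Γ x (Cw * M)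

open MvPolynomial Finset

namespace JetProof

variable {n : ℕ}

/-! ### Multi-indices as finsupps -/

def toF {n : ℕ} (β : Fin n → ℕ) : Fin n →₀ ℕ := ∑ i, Finsupp.single i (β i)

lemma toF_apply (β : Fin n → ℕ) (i : Fin n) : toF β i = β i := by
  classical
  rw [toF, Finsupp.finset_sum_apply]
  simp [Finsupp.single_apply]

lemma toF_coe (γ : Fin n →₀ ℕ) : toF (⇑γ) = γ := by
  ext i; rw [toF_apply]

lemma sum_toF (β : Fin n → ℕ) : (∑ i, toF β i) = ∑ i, β i := by
  simp [toF_apply]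

/-! ### Basic properties of `pdiff` -/

lemma iterate_pderiv_add (i : Fin n) (k : ℕ) (p q : MvPolynomial (Fin n) ℝ) :
    (fun R : MvPolynomial (Fin n) ℝ => pderiv i R)^[k] (p + q)
      = (fun R : MvPolynomial (Fin n) ℝ => pderiv i R)^[k] p
        + (fun R : MvPolynomial (Fin n) ℝ => pderiv i R)^[k] q := by
  induction k generalizing p q with
  | zero => simp
  | succ k ih => simp [Function.iterate_succ_apply, map_add, ih]

lemma iterate_pderiv_smul (i : Fin n) (k : ℕ) (c : ℝ) (p : MvPolynomial (Fin n) ℝ) :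
    (fun R : MvPolynomial (Fin n) ℝ => pderiv i R)^[k] (c • p)
      = c • (fun R : MvPolynomial (Fin n) ℝ => pderiv i R)^[k] p := by
  induction k generalizing p with
  | zero => simp
  | succ k ih => simp [Function.iterate_succ_apply, ih]

lemma pdiff_add (β : Fin n → ℕ) (p q : MvPolynomial (Fin n) ℝ) :
    pdiff β (p + q) = pdiff β p + pdiff β q := by
  unfold pdiff
  induction List.finRange n with
  | nil => simp
  | cons i t ih => simp [List.foldr_cons, ih, iterate_pderiv_add]

lemma pdiff_smul (β : Fin n → ℕ) (c : ℝ) (p : MvPolynomial (Fin n) ℝ) :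
    pdiff β (c • p) = c • pdiff β p := by
  unfold pdiff
  induction List.finRange n with
  | nil => simp
  | cons i t ih => simp [List.foldr_cons, ih, iterate_pderiv_smul]

lemma pdEval_smul (β : Fin n → ℕ) (c : ℝ) (p : MvPolynomial (Fin n) ℝ) (x : Fin n → ℝ) :
    pdEval β (c • p) x = c * pdEval β p x := by
  unfold pdEval
  rw [pdiff_smul, ← C_mul', map_mul, eval_C]

/-! ### Translations -/

def shiftH (y : Fin n → ℝ) : MvPolynomial (Fin n) ℝ →ₐ[ℝ] MvPolynomial (Fin n) ℝ :=
  aeval fun i => X i + C (y i)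

lemma shiftH_X (y : Fin n → ℝ) (i : Fin n) : shiftH y (X i) = X i + C (y i) := by
  simp [shiftH]

lemma shiftH_shiftH (y z : Fin n → ℝ) (p : MvPolynomial (Fin n) ℝ) :
    shiftH y (shiftH z p) = shiftH (y + z) p := by
  have : (shiftH y).comp (shiftH z) = shiftH (y + z) := by
    apply MvPolynomial.algHom_ext
    intro i
    simp [shiftH, map_add, add_assoc]
  calc shiftH y (shiftH z p) = ((shiftH y).comp (shiftH z)) p := rfl
    _ = shiftH (y + z) p := by rw [this]

lemma shiftH_zero (p : MvPolynomial (Fin n) ℝ) : shiftH (0 : Fin n → ℝ) p = p := by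
  have : shiftH (0 : Fin n → ℝ) = AlgHom.id ℝ _ := by
    apply MvPolynomial.algHom_ext
    intro i
    simp [shiftH]
  rw [this]; rfl

lemma shiftH_inv (y : Fin n → ℝ) (p : MvPolynomial (Fin n) ℝ) :
    shiftH (-y) (shiftH y p) = p := by
  rw [shiftH_shiftH]
  simp [shiftH_zero]

lemma shiftH_inv' (y : Fin n → ℝ) (p : MvPolynomial (Fin n) ℝ) :
    shiftH y (shiftH (-y) p) = p := by
  rw [shiftH_shiftH]
  simp [shiftH_zero]

lemma pderiv_shiftH (y : Fin n → ℝ) (i : Fin n) (p : MvPolynomial (Fin n) ℝ) :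
    pderiv i (shiftH y p) = shiftH y (pderiv i p) := by
  induction p using MvPolynomial.induction_on with
  | C a => simp [shiftH, pderiv_C]
  | add p q hp hq => simp [map_add, hp, hq]
  | mul_X p j hp =>
    by_cases h : j = i
    · subst h
      simp [map_mul, pderiv_mul, hp, shiftH_X, pderiv_C]
    · simp [map_mul, pderiv_mul, hp, shiftH_X, pderiv_C, pderiv_X_of_ne h]

lemma iterate_pderiv_shiftH (y : Fin n → ℝ) (i : Fin n) (k : ℕ) (p : MvPolynomial (Fin n) ℝ) :
    (fun R : MvPolynomial (Fin n) ℝ => pderiv i R)^[k] (shiftH y p)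
      = shiftH y ((fun R : MvPolynomial (Fin n) ℝ => pderiv i R)^[k] p) := by
  induction k generalizing p with
  | zero => simp
  | succ k ih => simp [Function.iterate_succ_apply, pderiv_shiftH, ih]

lemma pdiff_shiftH (β : Fin n → ℕ) (y : Fin n → ℝ) (p : MvPolynomial (Fin n) ℝ) :
    pdiff β (shiftH y p) = shiftH y (pdiff β p) := by
  unfold pdiff
  induction List.finRange n with
  | nil => simp
  | cons i t ih => simp [List.foldr_cons, ih, iterate_pderiv_shiftH]

lemma eval_shiftH (y z : Fin n → ℝ) (p : MvPolynomial (Fin n) ℝ) :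
    eval z (shiftH y p) = eval (fun i => z i + y i) p := by
  induction p using MvPolynomial.induction_on with
  | C a => simp [shiftH]
  | add p q hp hq => simp [map_add, hp, hq]
  | mul_X p j hp => simp [map_mul, shiftH_X, hp]

/-! ### Derivatives of monomials -/

lemma iterate_pderiv_monomial (i : Fin n) (k : ℕ) (d : Fin n →₀ ℕ) (c : ℝ) :
    (fun R : MvPolynomial (Fin n) ℝ => pderiv i R)^[k] (monomial d c)
      = monomial (d - Finsupp.single i k) (c * ((d i).descFactorial k : ℕ)) := by
  induction k with
  | zero => simp
  | succ k ih =>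
    rw [Function.iterate_succ_apply', ih, pderiv_monomial]
    have h1 : d - Finsupp.single i k - Finsupp.single i 1 = d - Finsupp.single i (k + 1) := by
      rw [tsub_tsub, ← Finsupp.single_add]
    have h2 : (d - Finsupp.single i k) i = d i - k := by
      simp [Finsupp.tsub_apply]
    rw [h1, h2, Nat.descFactorial_succ]
    congr 1
    push_cast [Nat.cast_mul]
    ring

lemma pdiff_monomial_aux (β : Fin n → ℕ) (l : List (Fin n)) (hl : l.Nodup)
    (d : Fin n →₀ ℕ) (c : ℝ) :
    l.foldr (fun i Q => (fun R : MvPolynomial (Fin n) ℝ => pderiv i R)^[β i] Q) (monomial d c)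
      = monomial (d - ∑ i ∈ l.toFinset, Finsupp.single i (β i))
          (c * ∏ i ∈ l.toFinset, ((d i).descFactorial (β i) : ℕ)) := by
  induction l with
  | nil => simp
  | cons i t ih =>
    obtain ⟨hit, ht⟩ := List.nodup_cons.mp hl
    have hti : i ∉ t.toFinset := by simpa using hit
    rw [List.foldr_cons, ih ht, iterate_pderiv_monomial]
    have happ : (∑ j ∈ t.toFinset, Finsupp.single j (β j)) i = 0 := by
      rw [Finsupp.finset_sum_apply]
      exact Finset.sum_eq_zero fun j hj =>
        Finsupp.single_eq_of_ne (by rintro rfl; exact hti hj)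
    rw [List.toFinset_cons, Finset.sum_insert hti, Finset.prod_insert hti]
    congr 1
    · rw [tsub_tsub]
      congr 1
      rw [add_comm]
    · rw [Finsupp.tsub_apply, happ, Nat.sub_zero]
      push_cast
      ring

lemma pdiff_monomial (β : Fin n → ℕ) (d : Fin n →₀ ℕ) (c : ℝ) :
    pdiff β (monomial d c)
      = monomial (d - toF β) (c * ∏ i, ((d i).descFactorial (β i) : ℕ)) := by
  rw [pdiff, pdiff_monomial_aux β _ (List.nodup_finRange n), List.toFinset_finRange]
  rfl

lemma eval_zero_monomial (d : Fin n →₀ ℕ) (a : ℝ) :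
    eval (0 : Fin n → ℝ) (monomial d a) = if d = 0 then a else 0 := by
  rw [eval_monomial]
  rcases eq_or_ne d 0 with rfl | h
  · simp [Finsupp.prod]
  · obtain ⟨i, hi⟩ := Finsupp.ne_iff.mp h
    have hi' : i ∈ d.support := Finsupp.mem_support_iff.mpr (by simpa using hi)
    rw [if_neg h, Finsupp.prod]
    rw [Finset.prod_eq_zero hi' (by simp [zero_pow, Finsupp.mem_support_iff.mp hi'])]
    ring

def factβ (β : Fin n → ℕ) : ℕ := ∏ i, (β i).factorial

lemma factβ_pos (β : Fin n → ℕ) : 0 < factβ β :=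
  Finset.prod_pos fun i _ => (β i).factorial_pos

lemma one_le_factβ (β : Fin n → ℕ) : (1 : ℝ) ≤ (factβ β : ℝ) := by
  exact_mod_cast factβ_pos β

lemma eval_zero_pdiff (β : Fin n → ℕ) (u : MvPolynomial (Fin n) ℝ) :
    eval (0 : Fin n → ℝ) (pdiff β u) = (factβ β : ℝ) * coeff (toF β) u := by
  induction u using MvPolynomial.induction_on' with
  | monomial d c =>
    rw [pdiff_monomial, eval_zero_monomial, coeff_monomial]
    rcases eq_or_ne d (toF β) with rfl | h
    · rw [if_pos (by simp), if_pos rfl]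
      have : ∀ i, (toF β i).descFactorial (β i) = (β i).factorial := by
        intro i; rw [toF_apply]; exact Nat.descFactorial_self _
      rw [Finset.prod_congr rfl fun i _ => this i]
      push_cast [factβ]
      ring
    · rw [if_neg h]
      rcases eq_or_ne (d - toF β) 0 with h0 | h0
      · have hle : ∀ i, d i ≤ β i := by
          intro i
          have := DFunLike.congr_fun h0 i
          simp [Finsupp.tsub_apply, toF_apply] at this
          omega
        have : ∃ i, d i < β i := by
          by_contra hc
          push_neg at hc
          exact h (by ext i; rw [toF_apply]; exact le_antisymm (hle i) (hc i))
        obtain ⟨i, hi⟩ := this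
        have : ((d i).descFactorial (β i) : ℕ) = 0 :=
          Nat.descFactorial_eq_zero_iff_lt.mpr hi
        rw [Finset.prod_eq_zero (Finset.mem_univ i) this]
        simp
      · rw [if_neg h0]
        ring
  | add p q hp hq =>
    rw [pdiff_add, map_add, hp, hq, MvPolynomial.coeff_add]
    ring

lemma pdEval_eq (β : Fin n → ℕ) (p : MvPolynomial (Fin n) ℝ) (x : Fin n → ℝ) :
    pdEval β p x = (factβ β : ℝ) * coeff (toF β) (shiftH x p) := by
  have h1 : pdEval β p x = eval (0 : Fin n → ℝ) (shiftH x (pdiff β p)) := by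
    rw [eval_shiftH]
    have hx : (fun i => (0 : Fin n → ℝ) i + x i) = x := by funext i; simp
    rw [hx]; rfl
  rw [h1, ← pdiff_shiftH, eval_zero_pdiff]

/-! ### Truncation -/

lemma mem_multiIdx {m : ℕ} (hm : 0 < m) (α : Fin n → ℕ) :
    α ∈ multiIdx m n ↔ (∑ i, α i) ≤ m - 1 := by
  unfold multiIdx
  rw [Finset.mem_filter]
  constructor
  · exact fun h => h.2
  · intro h
    refine ⟨Fintype.mem_piFinset.mpr fun i => ?_, h⟩
    rw [Finset.mem_range]
    have : α i ≤ ∑ j, α j :=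
      Finset.single_le_sum (f := fun j => α j) (fun j _ => Nat.zero_le _) (Finset.mem_univ i)
    omega

lemma toF_injective : Function.Injective (toF (n := n)) := by
  intro a b h
  funext i
  have := DFunLike.congr_fun h i
  rwa [toF_apply, toF_apply] at this

def mi (m n : ℕ) : Finset (Fin n →₀ ℕ) := (multiIdx m n).image toF

lemma mem_mi {m : ℕ} (hm : 0 < m) (γ : Fin n →₀ ℕ) :
    γ ∈ mi m n ↔ (∑ i, γ i) ≤ m - 1 := by
  unfold mi
  rw [Finset.mem_image]
  constructor
  · rintro ⟨α, hα, rfl⟩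
    rw [sum_toF]
    exact (mem_multiIdx hm α).mp hα
  · intro h
    exact ⟨⇑γ, (mem_multiIdx hm _).mpr (by simpa using h), toF_coe γ⟩

def Jtr (m : ℕ) {n : ℕ} (u : MvPolynomial (Fin n) ℝ) : MvPolynomial (Fin n) ℝ :=
  ∑ γ ∈ mi m n, monomial γ (coeff γ u)

lemma coeff_Jtr {m : ℕ} (hm : 0 < m) (u : MvPolynomial (Fin n) ℝ) (γ : Fin n →₀ ℕ) :
    coeff γ (Jtr m u) = if (∑ i, γ i) ≤ m - 1 then coeff γ u else 0 := by
  classical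
  unfold Jtr
  rw [MvPolynomial.coeff_sum]
  rw [Finset.sum_congr rfl fun β _ => coeff_monomial γ β (coeff β u)]
  rw [Finset.sum_ite_eq' (mi m n) γ fun β => coeff β u]
  simp only [mem_mi hm]

lemma Jtr_eq_self {m : ℕ} (hm : 0 < m) {u : MvPolynomial (Fin n) ℝ}
    (h : ∀ γ : Fin n →₀ ℕ, ¬((∑ i, γ i) ≤ m - 1) → coeff γ u = 0) : Jtr m u = u := by
  ext γ
  rw [coeff_Jtr hm]
  split_ifs with h'
  · rfl
  · exact (h γ h').symm

lemma Jtr_add {m : ℕ} (hm : 0 < m) (u v : MvPolynomial (Fin n) ℝ) :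
    Jtr m (u + v) = Jtr m u + Jtr m v := by
  ext γ
  rw [MvPolynomial.coeff_add, coeff_Jtr hm, coeff_Jtr hm, coeff_Jtr hm, MvPolynomial.coeff_add]
  split_ifs <;> simp

lemma Jtr_sub {m : ℕ} (hm : 0 < m) (u v : MvPolynomial (Fin n) ℝ) :
    Jtr m (u - v) = Jtr m u - Jtr m v := by
  ext γ
  rw [MvPolynomial.coeff_sub, coeff_Jtr hm, coeff_Jtr hm, coeff_Jtr hm, MvPolynomial.coeff_sub]
  split_ifs <;> simp

lemma Jtr_smul {m : ℕ} (hm : 0 < m) (c : ℝ) (u : MvPolynomial (Fin n) ℝ) :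
    Jtr m (c • u) = c • Jtr m u := by
  ext γ
  rw [MvPolynomial.coeff_smul, coeff_Jtr hm, coeff_Jtr hm, MvPolynomial.coeff_smul]
  split_ifs <;> simp

lemma Jtr_C {m : ℕ} (hm : 0 < m) (a : ℝ) : Jtr m (C a : MvPolynomial (Fin n) ℝ) = C a := by
  apply Jtr_eq_self hm
  intro γ h
  rw [coeff_C, if_neg]
  rintro rfl
  exact h (by simp)

lemma Jtr_one {m : ℕ} (hm : 0 < m) : Jtr m (1 : MvPolynomial (Fin n) ℝ) = 1 := by
  rw [← C_1, Jtr_C hm]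

lemma Jtr_Jtr {m : ℕ} (hm : 0 < m) (u : MvPolynomial (Fin n) ℝ) : Jtr m (Jtr m u) = Jtr m u := by
  apply Jtr_eq_self hm
  intro γ h
  rw [coeff_Jtr hm, if_neg h]

lemma sum_add_eq {a b γ : Fin n →₀ ℕ} (h : a + b = γ) :
    (∑ i, a i) + (∑ i, b i) = ∑ i, γ i := by
  subst h
  rw [← Finset.sum_add_distrib]
  simp [Finsupp.add_apply]

lemma Jtr_mul_left {m : ℕ} (hm : 0 < m) (u v : MvPolynomial (Fin n) ℝ) :
    Jtr m (Jtr m u * v) = Jtr m (u * v) := by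
  classical
  ext γ
  rw [coeff_Jtr hm, coeff_Jtr hm]
  split_ifs with h
  · rw [MvPolynomial.coeff_mul, MvPolynomial.coeff_mul]
    apply Finset.sum_congr rfl
    rintro ⟨a, b⟩ hab
    rw [Finset.HasAntidiagonal.mem_antidiagonal] at hab
    dsimp only at hab ⊢
    have ha : (∑ i, a i) ≤ m - 1 := by
      have := sum_add_eq hab; omega
    rw [coeff_Jtr hm, if_pos ha]
  · rfl

lemma coeff_pow_eq_zero {u : MvPolynomial (Fin n) ℝ} (hu : constantCoeff u = 0) :
    ∀ (k : ℕ) (γ : Fin n →₀ ℕ), (∑ i, γ i) < k → coeff γ (u ^ k) = 0 := by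
  intro k
  induction k with
  | zero => exact fun γ h => absurd h (Nat.not_lt_zero _)
  | succ k ih =>
    intro γ h
    rw [pow_succ, MvPolynomial.coeff_mul]
    apply Finset.sum_eq_zero
    rintro ⟨a, b⟩ hab
    rw [Finset.HasAntidiagonal.mem_antidiagonal] at hab
    dsimp only at hab ⊢
    rcases eq_or_ne b 0 with rfl | hb
    · have hc : coeff (0 : Fin n →₀ ℕ) u = 0 := by
        rw [← constantCoeff_eq] at *; exact hu
      rw [hc, mul_zero]
    · have hb1 : 1 ≤ ∑ i, b i := by
        obtain ⟨i, hi⟩ := Finsupp.ne_iff.mp hb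
        have : b i ≤ ∑ j, b j :=
          Finset.single_le_sum (f := fun j => b j) (fun j _ => Nat.zero_le _) (Finset.mem_univ i)
        simp only [Finsupp.coe_zero, Pi.zero_apply] at hi
        omega
      have ha : (∑ i, a i) < k := by
        have := sum_add_eq hab; omega
      rw [ih a ha, zero_mul]

lemma Jtr_pow_mul {m : ℕ} (hm : 0 < m) {v : MvPolynomial (Fin n) ℝ}
    (r : MvPolynomial (Fin n) ℝ) (hv : constantCoeff v = 0) : Jtr m (v ^ m * r) = 0 := by
  ext γ
  rw [coeff_Jtr hm, MvPolynomial.coeff_zero]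
  split_ifs with h
  · rw [MvPolynomial.coeff_mul]
    apply Finset.sum_eq_zero
    rintro ⟨a, b⟩ hab
    rw [Finset.HasAntidiagonal.mem_antidiagonal] at hab
    dsimp only at hab ⊢
    have ha : (∑ i, a i) < m := by
      have := sum_add_eq hab; omega
    rw [coeff_pow_eq_zero hv m a ha, zero_mul]
  · rfl

lemma totalDegree_shiftH_le (y : Fin n → ℝ) (p : MvPolynomial (Fin n) ℝ) :
    (shiftH y p).totalDegree ≤ p.totalDegree := by
  conv_lhs => rw [p.as_sum]
  rw [map_sum]
  refine le_trans (totalDegree_finset_sum _ _) ?_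
  rw [Finset.sup_le_iff]
  intro d hd
  refine le_trans ?_ (le_totalDegree hd)
  rw [shiftH, aeval_monomial]
  refine le_trans (totalDegree_mul _ _) ?_
  have h1 : (algebraMap ℝ (MvPolynomial (Fin n) ℝ) (coeff d p)).totalDegree = 0 := by
    rw [MvPolynomial.algebraMap_eq, totalDegree_C]
  rw [h1, zero_add, Finsupp.prod]
  refine le_trans (totalDegree_finset_prod _ _) ?_
  rw [Finsupp.sum]
  apply Finset.sum_le_sum
  intro i _
  refine le_trans (totalDegree_pow _ _) ?_
  have hX1 : (X i + C (y i) : MvPolynomial (Fin n) ℝ).totalDegree ≤ 1 := by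
    refine le_trans (totalDegree_add _ _) ?_
    rw [totalDegree_X, totalDegree_C]
    simp
  calc d i * (X i + C (y i) : MvPolynomial (Fin n) ℝ).totalDegree ≤ d i * 1 :=
        Nat.mul_le_mul_left _ hX1
    _ = d i := mul_one _

lemma Jtr_eq_self_of_totalDegree {m : ℕ} (hm : 0 < m) {u : MvPolynomial (Fin n) ℝ}
    (h : u.totalDegree ≤ m - 1) : Jtr m u = u := by
  apply Jtr_eq_self hm
  intro γ hγ
  apply coeff_eq_zero_of_totalDegree_lt
  have hsupp : ∑ i ∈ γ.support, γ i = ∑ i, γ i :=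
    Finset.sum_subset (Finset.subset_univ _)
      fun i _ hi => by simpa using Finsupp.notMem_support_iff.mp hi
  omega

/-! ### jetAt via truncation -/

lemma jetAt_eq {m : ℕ} (hm : 0 < m) (x : Fin n → ℝ) (R : MvPolynomial (Fin n) ℝ) :
    jetAt m x R = shiftH (-x) (Jtr m (shiftH x R)) := by
  unfold jetAt Jtr
  rw [map_sum, mi, Finset.sum_image fun a _ b _ h => toF_injective h]
  apply Finset.sum_congr rfl
  intro α hα
  rw [shiftH, aeval_monomial, Finsupp.prod_fintype _ _ fun i => pow_zero _]
  rw [MvPolynomial.algebraMap_eq]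
  congr 1
  · rw [pdEval_eq]
    congr 1
    have hf : ((∏ i, (α i).factorial : ℕ) : ℝ) ≠ 0 := by
      exact_mod_cast (factβ_pos α).ne'
    have hfe : (factβ α : ℝ) = ((∏ i, (α i).factorial : ℕ) : ℝ) := rfl
    rw [hfe]
    exact mul_div_cancel_left₀ _ hf
  · apply Finset.prod_congr rfl
    intro i _
    rw [toF_apply]
    congr 1
    rw [Pi.neg_apply, map_neg, sub_eq_add_neg]

lemma odot_eq {m : ℕ} (hm : 0 < m) (x : Fin n → ℝ) (P Q : MvPolynomial (Fin n) ℝ) :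
    odot m x P Q = shiftH (-x) (Jtr m (shiftH x P * shiftH x Q)) := by
  unfold odot
  rw [jetAt_eq hm, map_mul]

/-! ### The square-root series -/

end JetProof

noncomputable def sqCoef : ℕ → ℝ
  | 0 => 1
  | (d+1) =>
    ((if d = 0 then (1:ℝ) else 0)
      - ∑ k ∈ (Finset.Ioo 0 (d+1)).attach, sqCoef k.1 * sqCoef (d+1-k.1)) / 2
  termination_by d => d
  decreasing_by
  · have := Finset.mem_Ioo.mp k.2; omega
  · have := Finset.mem_Ioo.mp k.2; omega

namespace JetProof

lemma sqCoef_zero : sqCoef 0 = 1 := by rw [sqCoef]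

lemma sqCoef_succ (d : ℕ) : sqCoef (d+1)
    = ((if d = 0 then (1:ℝ) else 0)
        - ∑ k ∈ Finset.Ioo 0 (d+1), sqCoef k * sqCoef (d+1-k)) / 2 := by
  rw [sqCoef, ← Finset.sum_attach (Finset.Ioo 0 (d+1)) fun k => sqCoef k * sqCoef (d+1-k)]

lemma sqCoef_conv (d : ℕ) :
    ∑ k ∈ Finset.range (d+1), sqCoef k * sqCoef (d-k) = if d ≤ 1 then 1 else 0 := by
  match d with
  | 0 => simp [sqCoef_zero]
  | (e+1) =>
    have h0 : (0:ℕ) ∉ insert (e+1) (Finset.Ioo 0 (e+1)) := by simp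
    have h1 : (e+1) ∉ Finset.Ioo 0 (e+1) := by simp
    have hsplit : Finset.range (e+2) = insert 0 (insert (e+1) (Finset.Ioo 0 (e+1))) := by
      ext k
      simp only [Finset.mem_range, Finset.mem_insert, Finset.mem_Ioo]
      omega
    rw [hsplit, Finset.sum_insert h0, Finset.sum_insert h1]
    rw [Nat.sub_zero, Nat.sub_self, sqCoef_zero, one_mul, mul_one]
    rw [sqCoef_succ]
    have hite : (if e + 1 ≤ 1 then (1:ℝ) else 0) = (if e = 0 then (1:ℝ) else 0) := by
      by_cases he : e = 0 <;> simp [he]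
    rw [hite]
    ring

def hpoly (m : ℕ) : Polynomial ℝ :=
  ∑ k ∈ Finset.range m, Polynomial.C (sqCoef k) * Polynomial.X ^ k

lemma coeff_hpoly (m j : ℕ) : (hpoly m).coeff j = if j < m then sqCoef j else 0 := by
  unfold hpoly
  rw [Polynomial.finset_sum_coeff]
  have hterm : ∀ k ∈ Finset.range m,
      (Polynomial.C (sqCoef k) * Polynomial.X ^ k).coeff j
        = if k = j then sqCoef k else 0 := by
    intro k _
    rw [Polynomial.coeff_C_mul, Polynomial.coeff_X_pow]
    rcases eq_or_ne j k with rfl | h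
    · simp
    · rw [if_neg h, mul_zero, if_neg (Ne.symm h)]
  rw [Finset.sum_congr rfl hterm, Finset.sum_ite_eq' (Finset.range m) j fun k => sqCoef k]
  simp [Finset.mem_range]

lemma hpoly_sq (m : ℕ) (hm : 0 < m) :
    ∃ r : Polynomial ℝ, hpoly m * hpoly m = 1 + Polynomial.X + Polynomial.X ^ m * r := by
  have hdvd : (Polynomial.X : Polynomial ℝ) ^ m ∣ (hpoly m * hpoly m - 1 - Polynomial.X) := by
    rw [Polynomial.X_pow_dvd_iff]
    intro d hd
    rw [Polynomial.coeff_sub, Polynomial.coeff_sub, Polynomial.coeff_mul]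
    rw [Finset.Nat.sum_antidiagonal_eq_sum_range_succ_mk]
    have hterm : ∀ k ∈ Finset.range (d+1),
        (hpoly m).coeff k * (hpoly m).coeff (d - k) = sqCoef k * sqCoef (d-k) := by
      intro k hk
      rw [Finset.mem_range] at hk
      rw [coeff_hpoly, coeff_hpoly, if_pos (by omega), if_pos (by omega)]
    rw [Finset.sum_congr rfl hterm, sqCoef_conv]
    rw [Polynomial.coeff_one, Polynomial.coeff_X]
    split_ifs with ha hb hc <;> first | (exfalso; omega) | norm_num
  obtain ⟨r, hr⟩ := hdvd
  exact ⟨r, by rw [← hr]; ring⟩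

/-! ### The truncated square root of `e + w • s₁` -/

variable {n : ℕ}

def gpoly (m : ℕ) {n : ℕ} (a : ℝ) (s₁ : MvPolynomial (Fin n) ℝ) : MvPolynomial (Fin n) ℝ :=
  ∑ k ∈ Finset.range m, (sqCoef k * a ^ k) • s₁ ^ k

def qpoly (m : ℕ) {n : ℕ} (e a : ℝ) (s₁ : MvPolynomial (Fin n) ℝ) : MvPolynomial (Fin n) ℝ :=
  C (Real.sqrt (e/2)) * gpoly m a s₁

lemma gpoly_eq_aeval (m : ℕ) (a : ℝ) (s₁ : MvPolynomial (Fin n) ℝ) :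
    gpoly m a s₁ = Polynomial.aeval (a • s₁) (hpoly m) := by
  unfold gpoly hpoly
  rw [map_sum]
  apply Finset.sum_congr rfl
  intro k _
  rw [map_mul, map_pow, Polynomial.aeval_X, Polynomial.aeval_C]
  rw [smul_pow, MvPolynomial.algebraMap_eq, C_mul', smul_smul]

lemma Jtr_gpoly_sq {m : ℕ} (hm : 0 < m) (a : ℝ) {s₁ : MvPolynomial (Fin n) ℝ}
    (hs0 : constantCoeff s₁ = 0) (hself : Jtr m s₁ = s₁) :
    Jtr m (gpoly m a s₁ * gpoly m a s₁) = 1 + a • s₁ := by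
  obtain ⟨r, hr⟩ := hpoly_sq m hm
  rw [gpoly_eq_aeval, ← map_mul, hr]
  rw [map_add, map_add, map_one, Polynomial.aeval_X, map_mul, map_pow, Polynomial.aeval_X]
  rw [Jtr_add hm, Jtr_add hm, Jtr_one hm]
  have hv0 : constantCoeff (a • s₁) = 0 := by
    rw [MvPolynomial.smul_eq_C_mul, map_mul, hs0, mul_zero]
  rw [Jtr_pow_mul hm _ hv0, add_zero, Jtr_smul hm, hself]

lemma Jtr_qpoly_sq {m : ℕ} (hm : 0 < m) (e a : ℝ) (he : 0 ≤ e)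
    {s₁ : MvPolynomial (Fin n) ℝ} (hs0 : constantCoeff s₁ = 0) (hself : Jtr m s₁ = s₁) :
    Jtr m (qpoly m e a s₁ * qpoly m e a s₁) = C (e/2) + ((e/2) * a) • s₁ := by
  unfold qpoly
  have hq : (C (Real.sqrt (e/2)) * gpoly m a s₁) * (C (Real.sqrt (e/2)) * gpoly m a s₁)
      = C (e/2) * (gpoly m a s₁ * gpoly m a s₁) := by
    have : (C (Real.sqrt (e/2)) : MvPolynomial (Fin n) ℝ) * C (Real.sqrt (e/2)) = C (e/2) := by
      rw [← map_mul, Real.mul_self_sqrt (by linarith)]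
    calc (C (Real.sqrt (e/2)) * gpoly m a s₁) * (C (Real.sqrt (e/2)) * gpoly m a s₁)
        = (C (Real.sqrt (e/2)) * C (Real.sqrt (e/2))) * (gpoly m a s₁ * gpoly m a s₁) := by ring
      _ = C (e/2) * (gpoly m a s₁ * gpoly m a s₁) := by rw [this]
  rw [hq, C_mul', Jtr_smul hm, Jtr_gpoly_sq hm a hs0 hself]
  rw [smul_add, smul_smul]
  congr 1
  rw [MvPolynomial.smul_eq_C_mul, mul_one]

/-! ### Coefficient bounds for powers -/

def Mcard (m n : ℕ) : ℕ := (mi m n).sup fun γ => (Finset.HasAntidiagonal.antidiagonal γ).card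

lemma coeff_pow_bound {m : ℕ} (hm : 0 < m) {δ D : ℝ} (hδ : 0 < δ) (hD : 0 ≤ D)
    {u : MvPolynomial (Fin n) ℝ}
    (hu : ∀ γ : Fin n →₀ ℕ, (∑ i, γ i) ≤ m - 1 → |coeff γ u| ≤ D * δ ^ (-(∑ i, (γ i : ℤ)))) :
    ∀ (k : ℕ) (γ : Fin n →₀ ℕ), (∑ i, γ i) ≤ m - 1 →
      |coeff γ (u ^ k)| ≤ (D * ((Mcard m n : ℝ) + 1)) ^ k * δ ^ (-(∑ i, (γ i : ℤ))) := by
  intro k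
  induction k with
  | zero =>
    intro γ hγ
    rw [pow_zero, pow_zero, one_mul]
    rcases eq_or_ne γ 0 with rfl | h
    · have hz : (∑ i, (((0 : Fin n →₀ ℕ) i : ℕ) : ℤ)) = 0 := by simp
      rw [hz, neg_zero, zpow_zero]
      rw [MvPolynomial.coeff_one, if_pos rfl]
      norm_num
    · rw [MvPolynomial.coeff_one, if_neg fun hh => h hh.symm]
      simp only [abs_zero]
      positivity
  | succ k ih =>
    intro γ hγ
    rw [pow_succ, MvPolynomial.coeff_mul]
    refine le_trans (Finset.abs_sum_le_sum_abs _ _) ?_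
    have hbound : ∀ p ∈ Finset.HasAntidiagonal.antidiagonal γ,
        |coeff p.1 (u^k) * coeff p.2 u|
          ≤ ((D * ((Mcard m n : ℝ) + 1))^k * D) * δ ^ (-(∑ i, (γ i : ℤ))) := by
      rintro ⟨a, b⟩ hab
      rw [Finset.HasAntidiagonal.mem_antidiagonal] at hab
      dsimp only at hab ⊢
      have hsum := sum_add_eq hab
      have ha : (∑ i, a i) ≤ m - 1 := by omega
      have hb : (∑ i, b i) ≤ m - 1 := by omega
      rw [abs_mul]
      have h1 := ih a ha
      have h2 := hu b hb
      have hz : δ ^ (-(∑ i, (a i : ℤ))) * δ ^ (-(∑ i, (b i : ℤ)))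
          = δ ^ (-(∑ i, (γ i : ℤ))) := by
        rw [← zpow_add₀ hδ.ne']
        congr 1
        have : (∑ i, (a i : ℤ)) + (∑ i, (b i : ℤ)) = ∑ i, (γ i : ℤ) := by
          exact_mod_cast hsum
        omega
      calc |coeff a (u^k)| * |coeff b u|
          ≤ ((D * ((Mcard m n : ℝ) + 1))^k * δ ^ (-(∑ i, (a i : ℤ))))
              * (D * δ ^ (-(∑ i, (b i : ℤ)))) := by
            apply mul_le_mul h1 h2 (abs_nonneg _)
            positivity
        _ = ((D * ((Mcard m n : ℝ) + 1))^k * D)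
              * (δ ^ (-(∑ i, (a i : ℤ))) * δ ^ (-(∑ i, (b i : ℤ)))) := by ring
        _ = _ := by rw [hz]
    refine le_trans (Finset.sum_le_sum hbound) ?_
    rw [Finset.sum_const, nsmul_eq_mul]
    have hcard : ((Finset.HasAntidiagonal.antidiagonal γ).card : ℝ) ≤ (Mcard m n : ℝ) + 1 := by
      have hc : (Finset.HasAntidiagonal.antidiagonal γ).card ≤ Mcard m n :=
        Finset.le_sup (f := fun γ : Fin n →₀ ℕ => (Finset.HasAntidiagonal.antidiagonal γ).card)
          ((mem_mi hm γ).mpr hγ)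
      have := Nat.le_succ (Mcard m n)
      exact_mod_cast le_trans hc this
    calc ((Finset.HasAntidiagonal.antidiagonal γ).card : ℝ)
          * (((D * ((Mcard m n : ℝ) + 1))^k * D) * δ ^ (-(∑ i, (γ i : ℤ))))
        ≤ ((Mcard m n : ℝ) + 1)
            * (((D * ((Mcard m n : ℝ) + 1))^k * D) * δ ^ (-(∑ i, (γ i : ℤ)))) := by
          apply mul_le_mul_of_nonneg_right hcard
          positivity
      _ = (D * ((Mcard m n : ℝ) + 1))^(k+1) * δ ^ (-(∑ i, (γ i : ℤ))) := by ring

end JetProof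


namespace JetProof

set_option maxHeartbeats 1000000 in
theorem main_lemma (m n : ℕ) (hm : 0 < m) (hn : 0 < n)
    (Cw C₁ : ℝ) (hCw : 0 < Cw) (hC₁ : 0 < C₁) :
    ∃ C₂ : ℝ, 0 < C₂ ∧
      ∀ (E : Set (Fin n → ℝ)), E.Finite →
      ∀ (Γ : (Fin n → ℝ) → ℝ → Set (MvPolynomial (Fin n) ℝ)) (δmax : ℝ), 0 < δmax →
        ShapeField m n E Γ → WConvex m n E Γ Cw δmax →
        ∀ x₀ ∈ E, ∀ M₀ : ℝ, 0 < M₀ → ∀ δ : ℝ, 0 < δ → δ ≤ δmax →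
          ∀ P₀ Phat Shat : MvPolynomial (Fin n) ℝ,
            P₀ + (1 / C₁) • Phat ∈ Γ x₀ (C₁ * M₀) →
            P₀ - (1 / C₁) • Phat ∈ Γ x₀ (C₁ * M₀) →
            (∀ β : Fin n → ℕ, (∑ i, β i) ≤ m - 1 →
              |pdEval β Phat x₀| ≤ C₁ * M₀ * δ ^ (m - ∑ i, β i)) →
            (∀ β : Fin n → ℕ, (∑ i, β i) ≤ m - 1 →
              |pdEval β Shat x₀| ≤ C₁ * δ ^ (-(∑ i, (β i : ℤ)))) →
            P₀ + (1 / C₂) • odot m x₀ Shat Phat ∈ Γ x₀ (C₂ * M₀) ∧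
            P₀ - (1 / C₂) • odot m x₀ Shat Phat ∈ Γ x₀ (C₂ * M₀) := by
  classical
  obtain ⟨F, hFdef⟩ : ∃ x : ℝ, x = ((Nat.factorial (m-1) : ℕ) : ℝ) ^ n := ⟨_, rfl⟩
  obtain ⟨Mc, hMcdef⟩ : ∃ x : ℝ, x = (Mcard m n : ℝ) + 1 := ⟨_, rfl⟩
  obtain ⟨Sab, hSabdef⟩ : ∃ x : ℝ, x = ∑ k ∈ Finset.range m, |sqCoef k| := ⟨_, rfl⟩
  obtain ⟨G, hGdef⟩ : ∃ x : ℝ, x = C₁ * Mc := ⟨_, rfl⟩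
  obtain ⟨T, hTdef⟩ : ∃ x : ℝ, x = 2*C₁ + 2*F*Sab*G + Cw*(C₁+2)/C₁ + 1 := ⟨_, rfl⟩
  have hF1 : 1 ≤ F := by
    rw [hFdef]
    have : 1 ≤ ((Nat.factorial (m-1) : ℕ) : ℝ) := by
      exact_mod_cast Nat.one_le_iff_ne_zero.mpr (Nat.factorial_ne_zero _)
    exact one_le_pow₀ this
  have hSab1 : 1 ≤ Sab := by
    rw [hSabdef]
    have h0mem : 0 ∈ Finset.range m := Finset.mem_range.mpr hm
    have : |sqCoef 0| ≤ ∑ k ∈ Finset.range m, |sqCoef k| :=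
      Finset.single_le_sum (f := fun k => |sqCoef k|) (fun k _ => abs_nonneg _) h0mem
    rw [sqCoef_zero] at this
    simpa using this
  have hMc0 : (0:ℝ) < Mc := by rw [hMcdef]; positivity
  have hG0 : (0:ℝ) < G := by rw [hGdef]; exact mul_pos hC₁ hMc0
  have hT0 : (0:ℝ) < T := by
    rw [hTdef]
    have h1 : (0:ℝ) ≤ 2*F*Sab*G :=
      mul_nonneg (mul_nonneg (mul_nonneg (by norm_num) (by linarith)) (by linarith)) hG0.le
    have h2 : (0:ℝ) ≤ Cw*(C₁+2)/C₁ := by positivity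
    nlinarith
  have htC₁ : (1/T) * C₁ ≤ 1/2 := by
    rw [div_mul_eq_mul_div, one_mul, div_le_div_iff₀ hT0 (by norm_num)]
    have h1 : (0:ℝ) ≤ 2*F*Sab*G :=
      mul_nonneg (mul_nonneg (mul_nonneg (by norm_num) (by linarith)) (by linarith)) hG0.le
    have h2 : (0:ℝ) ≤ Cw*(C₁+2)/C₁ := by positivity
    rw [hTdef]; nlinarith
  have hmain2 : F * Sab * (2*(1/T)*G) ≤ 1 := by
    have heq : F * Sab * (2*(1/T)*G) = (2*F*Sab*G)/T := by field_simp
    rw [heq, div_le_one hT0, hTdef]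
    have h2 : (0:ℝ) ≤ Cw*(C₁+2)/C₁ := by positivity
    nlinarith
  have h2tG : 2*(1/T)*G ≤ 1 := by
    have h0 : (0:ℝ) ≤ 2*(1/T)*G := by positivity
    have hFS : 1 ≤ F * Sab := by nlinarith
    calc 2*(1/T)*G = 1 * (2*(1/T)*G) := (one_mul _).symm
      _ ≤ (F*Sab) * (2*(1/T)*G) := mul_le_mul_of_nonneg_right hFS h0
      _ = F * Sab * (2*(1/T)*G) := by ring
      _ ≤ 1 := hmain2
  have hCwK : Cw*(C₁+2) ≤ C₁*T := by
    have heq : C₁ * (Cw*(C₁+2)/C₁) = Cw*(C₁+2) := by field_simp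
    have h1 : (0:ℝ) ≤ 2*F*Sab*G :=
      mul_nonneg (mul_nonneg (mul_nonneg (by norm_num) (by linarith)) (by linarith)) hG0.le
    rw [hTdef]; nlinarith
  refine ⟨C₁ * T, mul_pos hC₁ hT0, ?_⟩
  intro E hE Γ δmax hδmax hSF hWC x₀ hx₀ M₀ hM₀ δ hδ hδle P₀ Phat Shat hP1 hP2 hPhat hShat
  obtain ⟨K, hKdef⟩ : ∃ x : ℝ, x = C₁ + 2 := ⟨_, rfl⟩
  have hK0 : (0:ℝ) < K := by rw [hKdef]; linarith
  have hKM : (0:ℝ) < K * M₀ := mul_pos hK0 hM₀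
  obtain ⟨-, hdeg, hmono⟩ := hSF x₀ hx₀ (K*M₀) hKM
  have hP1' : P₀ + (1/C₁) • Phat ∈ Γ x₀ (K*M₀) :=
    hmono (C₁*M₀) (by positivity) (by rw [hKdef]; nlinarith) hP1
  have hP2' : P₀ - (1/C₁) • Phat ∈ Γ x₀ (K*M₀) :=
    hmono (C₁*M₀) (by positivity) (by rw [hKdef]; nlinarith) hP2
  have hdeg1 : (P₀ + (1/C₁) • Phat).totalDegree ≤ m - 1 := hdeg _ hP1'
  have hdeg2 : (P₀ - (1/C₁) • Phat).totalDegree ≤ m - 1 := hdeg _ hP2'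
  -- data about Shat
  obtain ⟨S', hS'def⟩ : ∃ x : MvPolynomial (Fin n) ℝ, x = shiftH x₀ Shat := ⟨_, rfl⟩
  obtain ⟨s₀, hs₀def⟩ : ∃ x : ℝ, x = constantCoeff S' := ⟨_, rfl⟩
  obtain ⟨s₁, hs₁def⟩ : ∃ x : MvPolynomial (Fin n) ℝ, x = Jtr m S' - C s₀ := ⟨_, rfl⟩
  have hfzero : factβ (fun _ : Fin n => 0) = 1 := by simp [factβ]
  have htFzero : toF (fun _ : Fin n => 0) = 0 := by ext i; simp [toF_apply]
  have hs0b : |s₀| ≤ C₁ := by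
    have h := hShat (fun _ => 0) (by simp)
    rw [pdEval_eq, hfzero, htFzero, Nat.cast_one, one_mul, ← hS'def] at h
    rw [hs₀def, constantCoeff_eq]
    simpa using h
  have hs₁0 : constantCoeff s₁ = 0 := by
    rw [hs₁def, map_sub, constantCoeff_C, constantCoeff_eq, coeff_Jtr hm, if_pos (by simp),
      hs₀def, constantCoeff_eq, sub_self]
  have hs₁self : Jtr m s₁ = s₁ := by
    rw [hs₁def, Jtr_sub hm, Jtr_Jtr hm, Jtr_C hm]
  have hs₁b : ∀ γ : Fin n →₀ ℕ, (∑ i, γ i) ≤ m - 1 →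
      |coeff γ s₁| ≤ C₁ * δ ^ (-(∑ i, (γ i : ℤ))) := by
    intro γ hγ
    rw [hs₁def, MvPolynomial.coeff_sub, coeff_Jtr hm, if_pos hγ, coeff_C]
    rcases eq_or_ne γ 0 with rfl | hne
    · rw [if_pos rfl]
      have hz0 : coeff (0 : Fin n →₀ ℕ) S' - s₀ = 0 := by
        rw [hs₀def, constantCoeff_eq]; ring
      rw [hz0, abs_zero]
      positivity
    · rw [if_neg (fun hh => hne hh.symm), sub_zero]
      have h := hShat (⇑γ) (by simpa using hγ)
      rw [pdEval_eq, toF_coe, ← hS'def] at h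
      have habs : |coeff γ S'| ≤ |(factβ ⇑γ : ℝ) * coeff γ S'| := by
        rw [abs_mul, abs_of_nonneg (by positivity : (0:ℝ) ≤ (factβ ⇑γ : ℝ))]
        nlinarith [one_le_factβ (⇑γ), abs_nonneg (coeff γ S')]
      exact le_trans habs h
  -- coefficient bound for the square-root jets
  have qb : ∀ (e a : ℝ), 1/2 ≤ e → e ≤ 3/2 → |a| ≤ 2*(1/T) →
      ∀ β : Fin n → ℕ, (∑ i, β i) ≤ m - 1 →
        |pdEval β (shiftH (-x₀) (qpoly m e a s₁)) x₀| ≤ δ ^ (-(∑ i, (β i : ℤ))) := by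
    intro e a he1 he2 haa β hβ
    rw [pdEval_eq, shiftH_inv' x₀]
    have hsqrt1 : Real.sqrt (e/2) ≤ 1 := by
      have : Real.sqrt (e/2) ≤ Real.sqrt 1 := Real.sqrt_le_sqrt (by linarith)
      simpa using this
    have hsqrt0 : 0 ≤ Real.sqrt (e/2) := Real.sqrt_nonneg _
    unfold qpoly
    rw [MvPolynomial.coeff_C_mul]
    rcases Nat.eq_zero_or_pos (∑ i, β i) with hz | hpos
    · have hall : ∀ i, β i = 0 := by
        intro i
        exact Finset.sum_eq_zero_iff.mp hz i (Finset.mem_univ i)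
      have hβ0 : toF β = 0 := by ext i; simp [toF_apply, hall i]
      have hfz : (factβ β : ℝ) = 1 := by
        have h1 : factβ β = 1 := by simp [factβ, hall]
        rw [h1, Nat.cast_one]
      have hzz : (∑ i, (β i : ℤ)) = 0 := by exact_mod_cast hz
      rw [hβ0, hfz, one_mul, hzz, neg_zero, zpow_zero]
      have hg : coeff 0 (gpoly m a s₁) = 1 := by
        unfold gpoly
        rw [MvPolynomial.coeff_sum]
        rw [Finset.sum_eq_single 0]
        · rw [MvPolynomial.coeff_smul, pow_zero, pow_zero, sqCoef_zero]
          rw [MvPolynomial.coeff_one, if_pos rfl]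
          simp
        · intro k hk hk0
          rw [MvPolynomial.coeff_smul]
          have hck : coeff (0 : Fin n →₀ ℕ) (s₁ ^ k) = 0 := by
            rw [← constantCoeff_eq, map_pow, hs₁0, zero_pow hk0]
          rw [hck, smul_zero]
        · intro h0
          exact absurd (Finset.mem_range.mpr hm) h0
      rw [hg, mul_one, abs_of_nonneg hsqrt0]
      exact hsqrt1
    · have hγne : toF β ≠ 0 := by
        intro hh
        have hzz : (∑ i, β i) = 0 := by
          rw [← sum_toF, hh]; simp
        omega
      have hgb : |coeff (toF β) (gpoly m a s₁)|
          ≤ Sab * ((2*(1/T)*G) * δ ^ (-(∑ i, (β i : ℤ)))) := by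
        unfold gpoly
        rw [MvPolynomial.coeff_sum]
        refine le_trans (Finset.abs_sum_le_sum_abs _ _) ?_
        have hterm : ∀ k ∈ Finset.range m,
            |coeff (toF β) ((sqCoef k * a^k) • s₁ ^ k)|
              ≤ |sqCoef k| * ((2*(1/T)*G) * δ ^ (-(∑ i, (β i : ℤ)))) := by
          intro k hk
          rcases Nat.eq_zero_or_pos k with rfl | hk1
          · have h1 : coeff (toF β) ((sqCoef 0 * a ^ 0) • s₁ ^ (0:ℕ)) = 0 := by
              rw [MvPolynomial.coeff_smul, pow_zero s₁, MvPolynomial.coeff_one,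
                if_neg fun hh => hγne hh.symm, smul_zero]
            rw [h1, abs_zero]
            positivity
          · rw [MvPolynomial.coeff_smul, smul_eq_mul, abs_mul, abs_mul, abs_pow]
            have hβγ : (∑ i, (toF β) i) ≤ m - 1 := by rw [sum_toF]; exact hβ
            have hp := coeff_pow_bound hm hδ (le_of_lt hC₁) hs₁b k (toF β) hβγ
            have hzeq : (∑ i, ((toF β) i : ℤ)) = ∑ i, (β i : ℤ) := by
              apply Finset.sum_congr rfl
              intro i _
              rw [toF_apply]
            rw [hzeq] at hp
            rw [← hMcdef] at hp
            calc |sqCoef k| * |a|^k * |coeff (toF β) (s₁ ^ k)|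
                ≤ |sqCoef k| * ((2*(1/T))^k * ((C₁ * Mc)^k * δ ^ (-(∑ i, (β i : ℤ))))) := by
                  rw [mul_assoc]
                  apply mul_le_mul_of_nonneg_left _ (abs_nonneg _)
                  apply mul_le_mul (pow_le_pow_left₀ (abs_nonneg a) haa k) hp (abs_nonneg _)
                  positivity
              _ = |sqCoef k| * ((2*(1/T)*G)^k * δ ^ (-(∑ i, (β i : ℤ)))) := by
                  rw [hGdef, mul_pow, mul_pow]
                  ring
              _ ≤ |sqCoef k| * ((2*(1/T)*G)^1 * δ ^ (-(∑ i, (β i : ℤ)))) := by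
                  apply mul_le_mul_of_nonneg_left _ (abs_nonneg _)
                  apply mul_le_mul_of_nonneg_right _ (by positivity)
                  exact pow_le_pow_of_le_one (by positivity) h2tG hk1
              _ = |sqCoef k| * ((2*(1/T)*G) * δ ^ (-(∑ i, (β i : ℤ)))) := by rw [pow_one]
        refine le_trans (Finset.sum_le_sum hterm) ?_
        rw [← Finset.sum_mul, ← hSabdef]
      have hfb : (factβ β : ℝ) ≤ F := by
        rw [hFdef]
        have hcast : (factβ β : ℝ) = ∏ i, (((β i).factorial : ℕ) : ℝ) := by
          rw [factβ]; push_cast; rfl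
        have hpc : (((Nat.factorial (m-1) : ℕ) : ℝ)) ^ n
            = ∏ _i : Fin n, (((Nat.factorial (m-1) : ℕ)) : ℝ) := by
          rw [Finset.prod_const, Finset.card_univ, Fintype.card_fin]
        rw [hcast, hpc]
        apply Finset.prod_le_prod
        · intro i _; positivity
        · intro i _
          have hle : β i ≤ m - 1 := by
            have : β i ≤ ∑ j, β j :=
              Finset.single_le_sum (f := fun j => β j) (fun j _ => Nat.zero_le _)
                (Finset.mem_univ i)
            omega
          exact_mod_cast Nat.factorial_le hle
      have hδz : (0:ℝ) < δ ^ (-(∑ i, (β i : ℤ))) := by positivity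
      have habs : |(factβ β : ℝ) * (Real.sqrt (e/2) * coeff (toF β) (gpoly m a s₁))|
          = (factβ β : ℝ) * (Real.sqrt (e/2) * |coeff (toF β) (gpoly m a s₁)|) := by
        rw [abs_mul, abs_mul, abs_of_nonneg (by positivity : (0:ℝ) ≤ (factβ β : ℝ)),
          abs_of_nonneg hsqrt0]
      rw [habs]
      have step1 : Real.sqrt (e/2) * |coeff (toF β) (gpoly m a s₁)|
          ≤ 1 * (Sab * ((2*(1/T)*G) * δ ^ (-(∑ i, (β i : ℤ))))) :=
        mul_le_mul hsqrt1 hgb (abs_nonneg _) zero_le_one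
      rw [one_mul] at step1
      have step2 : (factβ β : ℝ) * (Real.sqrt (e/2) * |coeff (toF β) (gpoly m a s₁)|)
          ≤ F * (Sab * ((2*(1/T)*G) * δ ^ (-(∑ i, (β i : ℤ))))) := by
        apply mul_le_mul hfb step1 (by positivity) (by linarith)
      refine le_trans step2 ?_
      have step3 : F * (Sab * ((2*(1/T)*G) * δ ^ (-(∑ i, (β i : ℤ)))))
          = (F * Sab * (2*(1/T)*G)) * δ ^ (-(∑ i, (β i : ℤ))) := by ring
      rw [step3]
      calc (F * Sab * (2*(1/T)*G)) * δ ^ (-(∑ i, (β i : ℤ)))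
          ≤ 1 * δ ^ (-(∑ i, (β i : ℤ))) :=
            mul_le_mul_of_nonneg_right hmain2 hδz.le
        _ = δ ^ (-(∑ i, (β i : ℤ))) := one_mul _
  -- the translated jets are unchanged by truncation
  have hJp1 : Jtr m (shiftH x₀ (P₀ + (1/C₁) • Phat)) = shiftH x₀ (P₀ + (1/C₁) • Phat) :=
    Jtr_eq_self_of_totalDegree hm (le_trans (totalDegree_shiftH_le _ _) hdeg1)
  have hJp2 : Jtr m (shiftH x₀ (P₀ - (1/C₁) • Phat)) = shiftH x₀ (P₀ - (1/C₁) • Phat) :=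
    Jtr_eq_self_of_totalDegree hm (le_trans (totalDegree_shiftH_le _ _) hdeg2)
  have hJA : ∀ (ew ww : ℝ) (p : MvPolynomial (Fin n) ℝ), Jtr m p = p →
      Jtr m ((C ew + ww • s₁) * p)
        = ew • p + ww • (Jtr m (S' * p)) - (ww * s₀) • p := by
    intro ew ww p hp
    have hexp : (C ew + ww • s₁) * p
        = C ew * p + (ww • (Jtr m S' * p) - ww • (C s₀ * p)) := by
      rw [hs₁def]
      rw [add_mul, smul_mul_assoc, sub_mul, smul_sub]
    rw [hexp, Jtr_add hm, Jtr_sub hm, Jtr_smul hm, Jtr_smul hm]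
    rw [C_mul', Jtr_smul hm, hp, Jtr_mul_left hm]
    rw [C_mul', Jtr_smul hm, hp, smul_smul]
    abel
  have hSp1 : Jtr m (S' * shiftH x₀ (P₀ + (1/C₁) • Phat))
      = Jtr m (S' * shiftH x₀ P₀) + (1/C₁) • Jtr m (S' * shiftH x₀ Phat) := by
    rw [map_add, map_smul, mul_add, mul_smul_comm, Jtr_add hm, Jtr_smul hm]
  have hSp2 : Jtr m (S' * shiftH x₀ (P₀ - (1/C₁) • Phat))
      = Jtr m (S' * shiftH x₀ P₀) - (1/C₁) • Jtr m (S' * shiftH x₀ Phat) := by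
    rw [map_sub, map_smul, mul_sub, mul_smul_comm, Jtr_sub hm, Jtr_smul hm]
  have hodotSP : odot m x₀ Shat Phat = shiftH (-x₀) (Jtr m (S' * shiftH x₀ Phat)) := by
    rw [odot_eq hm, hS'def]
  -- the main membership, for a signed parameter w
  have main : ∀ w : ℝ, |w| = 1/T →
      P₀ + (w/C₁) • odot m x₀ Shat Phat ∈ Γ x₀ (C₁*T*M₀) := by
    intro w hw
    have he : ∀ w' : ℝ, |w'| = 1/T → 1/2 ≤ 1 + w' * s₀ ∧ 1 + w'*s₀ ≤ 3/2 := by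
      intro w' hw'
      have h1 : |w' * s₀| ≤ 1/2 := by
        rw [abs_mul, hw']
        calc (1/T) * |s₀| ≤ (1/T) * C₁ := by
              apply mul_le_mul_of_nonneg_left hs0b (by positivity)
          _ ≤ 1/2 := htC₁
      have h2 := abs_le.mp h1
      constructor <;> linarith [h2.1, h2.2]
    obtain ⟨he₁l, he₁r⟩ := he w hw
    obtain ⟨he₂l, he₂r⟩ := he (-w) (by rwa [abs_neg])
    have he₁0 : (1 + w*s₀) ≠ 0 := by linarith
    have he₂0 : (1 + (-w)*s₀) ≠ 0 := by linarith
    obtain ⟨q₁, hq₁def⟩ : ∃ x : MvPolynomial (Fin n) ℝ,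
      x = qpoly m (1 + w*s₀) (w/(1 + w*s₀)) s₁ := ⟨_, rfl⟩
    obtain ⟨q₂, hq₂def⟩ : ∃ x : MvPolynomial (Fin n) ℝ,
      x = qpoly m (1 + (-w)*s₀) ((-w)/(1 + (-w)*s₀)) s₁ := ⟨_, rfl⟩
    have hA₁ : Jtr m (q₁ * q₁) = C ((1 + w*s₀)/2) + (w/2) • s₁ := by
      rw [hq₁def, Jtr_qpoly_sq hm _ _ (by linarith) hs₁0 hs₁self]
      have hsc : ((1 + w*s₀)/2) * (w/(1 + w*s₀)) = w/2 := by
        rw [div_mul_div_comm, mul_comm ((1:ℝ) + w*s₀) w, mul_div_mul_right _ _ he₁0]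
      rw [hsc]
    have hA₂ : Jtr m (q₂ * q₂) = C ((1 + (-w)*s₀)/2) + (-(w/2)) • s₁ := by
      rw [hq₂def, Jtr_qpoly_sq hm _ _ (by linarith) hs₁0 hs₁self]
      have hsc : ((1 + (-w)*s₀)/2) * ((-w)/(1 + (-w)*s₀)) = -(w/2) := by
        rw [div_mul_div_comm, mul_comm ((1:ℝ) + (-w)*s₀) (-w), mul_div_mul_right _ _ he₂0,
          neg_div]
      rw [hsc]
    have hQcond : ∀ β : Fin n → ℕ, (∑ i, β i) ≤ m - 1 →
        |pdEval β (shiftH (-x₀) q₁) x₀| ≤ δ ^ (-(∑ i, (β i : ℤ))) ∧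
        |pdEval β (shiftH (-x₀) q₂) x₀| ≤ δ ^ (-(∑ i, (β i : ℤ))) := by
      intro β hβ
      have ha₁ : |w/(1 + w*s₀)| ≤ 2*(1/T) := by
        rw [abs_div, hw, abs_of_pos (by linarith : (0:ℝ) < 1 + w*s₀)]
        rw [div_le_iff₀ (by linarith : (0:ℝ) < 1 + w*s₀)]
        have hT' : (0:ℝ) < 1/T := by positivity
        nlinarith
      have ha₂ : |(-w)/(1 + (-w)*s₀)| ≤ 2*(1/T) := by
        rw [abs_div, abs_neg, hw, abs_of_pos (by linarith : (0:ℝ) < 1 + (-w)*s₀)]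
        rw [div_le_iff₀ (by linarith : (0:ℝ) < 1 + (-w)*s₀)]
        have hT' : (0:ℝ) < 1/T := by positivity
        nlinarith
      constructor
      · rw [hq₁def]
        exact qb _ _ he₁l he₁r ha₁ β hβ
      · rw [hq₂def]
        exact qb _ _ he₂l he₂r ha₂ β hβ
    have hsum1 : odot m x₀ (shiftH (-x₀) q₁) (shiftH (-x₀) q₁)
        + odot m x₀ (shiftH (-x₀) q₂) (shiftH (-x₀) q₂) = 1 := by
      rw [odot_eq hm, odot_eq hm, shiftH_inv' x₀ q₁, shiftH_inv' x₀ q₂, ← map_add, hA₁, hA₂]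
      have hsum : (C ((1 + w*s₀)/2) + (w/2) • s₁) + (C ((1 + (-w)*s₀)/2) + (-(w/2)) • s₁)
          = 1 := by
        have h12 : (1 + w*s₀)/2 + (1 + (-w)*s₀)/2 = 1 := by ring
        calc (C ((1 + w*s₀)/2) + (w/2) • s₁) + (C ((1 + (-w)*s₀)/2) + (-(w/2)) • s₁)
            = C ((1 + w*s₀)/2 + (1 + (-w)*s₀)/2) + ((w/2) + (-(w/2))) • s₁ := by
              rw [map_add, add_smul]; abel
          _ = C 1 + (0:ℝ) • s₁ := by rw [h12, add_neg_cancel]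
          _ = 1 := by rw [zero_smul, add_zero, C_1]
      rw [hsum, map_one]
    have hdiffP : (P₀ + (1/C₁) • Phat) - (P₀ - (1/C₁) • Phat) = (2/C₁) • Phat := by
      match_scalars <;> ring
    have hdb : ∀ β : Fin n → ℕ, (∑ i, β i) ≤ m - 1 →
        |pdEval β ((P₀ + (1/C₁) • Phat) - (P₀ - (1/C₁) • Phat)) x₀|
          ≤ (K*M₀) * δ ^ (m - ∑ i, β i) := by
      intro β hβ
      rw [hdiffP, pdEval_smul, abs_mul, abs_of_pos (by positivity : (0:ℝ) < 2/C₁)]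
      have hb := hPhat β hβ
      have hδp : (0:ℝ) ≤ δ ^ (m - ∑ i, β i) := by positivity
      calc (2/C₁) * |pdEval β Phat x₀| ≤ (2/C₁) * (C₁ * M₀ * δ ^ (m - ∑ i, β i)) := by
            apply mul_le_mul_of_nonneg_left hb (by positivity)
        _ = 2 * M₀ * δ ^ (m - ∑ i, β i) := by field_simp
        _ ≤ (K*M₀) * δ ^ (m - ∑ i, β i) := by
            apply mul_le_mul_of_nonneg_right _ hδp
            rw [hKdef]; nlinarith
    have hmem := hWC δ hδ hδle x₀ hx₀ (K*M₀) hKM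
      (P₀ + (1/C₁) • Phat) (P₀ - (1/C₁) • Phat)
      (shiftH (-x₀) q₁) (shiftH (-x₀) q₂) hP1' hP2' hdb hQcond hsum1
    have hQQ1 : odot m x₀ (shiftH (-x₀) q₁) (shiftH (-x₀) q₁)
        = shiftH (-x₀) (Jtr m (q₁ * q₁)) := by
      rw [odot_eq hm, shiftH_inv' x₀ q₁]
    have hQQ2 : odot m x₀ (shiftH (-x₀) q₂) (shiftH (-x₀) q₂)
        = shiftH (-x₀) (Jtr m (q₂ * q₂)) := by
      rw [odot_eq hm, shiftH_inv' x₀ q₂]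
    have hkey : Jtr m ((C ((1 + w*s₀)/2) + (w/2) • s₁) * shiftH x₀ (P₀ + (1/C₁) • Phat))
        + Jtr m ((C ((1 + (-w)*s₀)/2) + (-(w/2)) • s₁) * shiftH x₀ (P₀ - (1/C₁) • Phat))
        = shiftH x₀ P₀ + (w/C₁) • Jtr m (S' * shiftH x₀ Phat) := by
      rw [hJA _ _ _ hJp1, hJA _ _ _ hJp2, hSp1, hSp2]
      rw [map_add (shiftH x₀), map_sub (shiftH x₀), map_smul (shiftH x₀)]
      match_scalars <;> ring
    have hX : odot m x₀ (odot m x₀ (shiftH (-x₀) q₁) (shiftH (-x₀) q₁)) (P₀ + (1/C₁) • Phat)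
        + odot m x₀ (odot m x₀ (shiftH (-x₀) q₂) (shiftH (-x₀) q₂)) (P₀ - (1/C₁) • Phat)
        = P₀ + (w/C₁) • odot m x₀ Shat Phat := by
      rw [hQQ1, hQQ2]
      rw [odot_eq hm x₀ (shiftH (-x₀) (Jtr m (q₁*q₁))) _,
        odot_eq hm x₀ (shiftH (-x₀) (Jtr m (q₂*q₂))) _]
      rw [shiftH_inv' x₀ (Jtr m (q₁*q₁)), shiftH_inv' x₀ (Jtr m (q₂*q₂))]
      rw [hA₁, hA₂, ← map_add (shiftH (-x₀)), hkey, map_add, map_smul, shiftH_inv x₀ P₀]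
      rw [hodotSP]
    rw [hX] at hmem
    obtain ⟨-, -, hmono₂⟩ := hSF x₀ hx₀ (C₁*T*M₀) (by positivity)
    refine hmono₂ (Cw*(K*M₀)) (by positivity) ?_ hmem
    have heq : Cw * (K*M₀) = (Cw*K)*M₀ := by ring
    rw [heq]
    apply mul_le_mul_of_nonneg_right _ hM₀.le
    rw [hKdef]
    exact hCwK
  constructor
  · have h := main (1/T) (abs_of_pos (by positivity))
    have harg : ((1/T)/C₁) = 1/(C₁*T) := by
      rw [div_div, one_div, one_div, mul_comm]
    rwa [harg] at h
  · have h := main (-(1/T)) (by rw [abs_neg]; exact abs_of_pos (by positivity))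
    have harg : ((-(1/T))/C₁) • odot m x₀ Shat Phat
        = -((1/(C₁*T)) • odot m x₀ Shat Phat) := by
      rw [neg_div, neg_smul, div_div, one_div, one_div, mul_comm]
    rw [harg, ← sub_eq_add_neg] at h
    exact h

end JetProof

/-- Lemma 3.1: if `P⁰ ± (1/C₁) P̂ ∈ Γ(x₀, C₁ M₀)`, `|∂^β P̂(x₀)| ≤ C₁ M₀ δ^{m-|β|}`
and `|∂^β Ŝ(x₀)| ≤ C₁ δ^{-|β|}` for `|β| ≤ m-1`, then
`P⁰ ± (1/C₂)(Ŝ ⊙_{x₀} P̂) ∈ Γ(x₀, C₂ M₀)` with `C₂` determined by `C₁`, `C_w`, `m`, `n`. -/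
theorem shape_field_multiply_basis_element (m n : ℕ) (hm : 0 < m) (hn : 0 < n)
    (Cw C₁ : ℝ) (hCw : 0 < Cw) (hC₁ : 0 < C₁) :
    ∃ C₂ : ℝ, 0 < C₂ ∧
      ∀ (E : Set (Fin n → ℝ)), E.Finite →
      ∀ (Γ : (Fin n → ℝ) → ℝ → Set (MvPolynomial (Fin n) ℝ)) (δmax : ℝ), 0 < δmax →
        ShapeField m n E Γ → WConvex m n E Γ Cw δmax →
        ∀ x₀ ∈ E, ∀ M₀ : ℝ, 0 < M₀ → ∀ δ : ℝ, 0 < δ → δ ≤ δmax →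
          ∀ P₀ Phat Shat : MvPolynomial (Fin n) ℝ,
            P₀ + (1 / C₁) • Phat ∈ Γ x₀ (C₁ * M₀) →
            P₀ - (1 / C₁) • Phat ∈ Γ x₀ (C₁ * M₀) →
            (∀ β : Fin n → ℕ, (∑ i, β i) ≤ m - 1 →
              |pdEval β Phat x₀| ≤ C₁ * M₀ * δ ^ (m - ∑ i, β i)) →
            (∀ β : Fin n → ℕ, (∑ i, β i) ≤ m - 1 →
              |pdEval β Shat x₀| ≤ C₁ * δ ^ (-(∑ i, (β i : ℤ)))) →
            P₀ + (1 / C₂) • odot m x₀ Shat Phat ∈ Γ x₀ (C₂ * M₀) ∧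
            P₀ - (1 / C₂) • odot m x₀ Shat Phat ∈ Γ x₀ (C₂ * M₀) :=
  JetProof.main_lemma m n hm hn Cw C₁ hCw hC₁

end
end
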